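/- Let C₊ ⊂ ℝ^d be a closed cone of dimension d_u with C₊ ∩ (ℝ^{d_s}×{0}) = {0}, and let Γ ⊂ ℝ^d be a d_s-dimensional embedded C¹ submanifold such that the straight line through any two distinct points of Γ is normal to some d_u-dimensional linear subspace contained in C₊. Let π : ℝ^d → ℝ^{d_s} be the orthogonal projection onto the first d_s coordinates. Then the restriction π_Γ : Γ → ℝ^{d_s} is injective, is a C¹ diffeomorphism onto its (open) image, and Γ is the graph of the C¹ map γ = π₊ ∘ π_Γ^{−1} : π(Γ) → ℝ^{d_u}, where π₊ is the projection onto the last d_u coordinates. -/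

import Mathlib

open Function Set
open scoped RealInnerProductSpace

noncomputable def eP1 (ds du : ℕ) : EuclideanSpace ℝ (Fin (ds + du)) →L[ℝ] EuclideanSpace ℝ (Fin ds) :=
  LinearMap.toContinuousLinearMap
    { toFun := fun x => WithLp.toLp 2 (fun i => x (Fin.castAdd du i))
      map_add' := fun _ _ => rfl
      map_smul' := fun _ _ => rfl }

noncomputable def eP2 (ds du : ℕ) : EuclideanSpace ℝ (Fin (ds + du)) →L[ℝ] EuclideanSpace ℝ (Fin du) :=
  LinearMap.toContinuousLinearMap
    { toFun := fun x => WithLp.toLp 2 (fun j => x (Fin.natAdd ds j))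
      map_add' := fun _ _ => rfl
      map_smul' := fun _ _ => rfl }

lemma eP1_apply (ds du : ℕ) (x : EuclideanSpace ℝ (Fin (ds + du))) (i : Fin ds) :
    eP1 ds du x i = x (Fin.castAdd du i) := rfl

lemma eP2_apply (ds du : ℕ) (x : EuclideanSpace ℝ (Fin (ds + du))) (j : Fin du) :
    eP2 ds du x j = x (Fin.natAdd ds j) := rfl

lemma inner_split (ds du : ℕ) (x y : EuclideanSpace ℝ (Fin (ds + du))) :
    ⟪x, y⟫ = ⟪eP1 ds du x, eP1 ds du y⟫ + ⟪eP2 ds du x, eP2 ds du y⟫ := by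
  simp only [PiLp.inner_apply, eP1_apply, eP2_apply]
  exact Fin.sum_univ_add (fun i => ⟪x i, y i⟫)

lemma norm_split (ds du : ℕ) (x : EuclideanSpace ℝ (Fin (ds + du))) :
    ‖x‖ ^ 2 = ‖eP1 ds du x‖ ^ 2 + ‖eP2 ds du x‖ ^ 2 := by
  rw [← real_inner_self_eq_norm_sq, ← real_inner_self_eq_norm_sq, ← real_inner_self_eq_norm_sq]
  exact inner_split ds du x x

lemma eP1_norm_le (ds du : ℕ) (x : EuclideanSpace ℝ (Fin (ds + du))) : ‖eP1 ds du x‖ ≤ ‖x‖ := by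
  have h := norm_split ds du x
  nlinarith [norm_nonneg (eP1 ds du x), norm_nonneg x, sq_nonneg (‖eP2 ds du x‖)]

lemma eP_ext (ds du : ℕ) (x y : EuclideanSpace ℝ (Fin (ds + du)))
    (h1 : eP1 ds du x = eP1 ds du y) (h2 : eP2 ds du x = eP2 ds du y) : x = y := by
  ext i
  refine Fin.addCases (fun i0 => ?_) (fun j0 => ?_) i
  · exact congrArg (· i0) h1
  · exact congrArg (· j0) h2

set_option maxHeartbeats 1000000 in
/-- a fake stable leaf is a graph: if `Γ ⊂ ℝ^{d_s+d_u}` is a `d_s`-dimensional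
embedded `C¹` submanifold whose chords are normal to `d_u`-dimensional subspaces contained
in a closed `d_u`-dimensional cone `C₊` with `C₊ ∩ (ℝ^{d_s} × {0}) = {0}`, then the orthogonal
projection `π` to the first `d_s` coordinates is injective on `Γ`, its image is open, and
`Γ` is the graph of a `C¹` map `γ` over `π(Γ)`. -/
theorem stmt_14 (ds du : ℕ) (hds : 1 ≤ ds) (hdu : 1 ≤ du)
    (Cplus : Set (EuclideanSpace ℝ (Fin (ds + du))))
    (hclosed : IsClosed Cplus)
    (hcone : ∀ (c : ℝ) (x : EuclideanSpace ℝ (Fin (ds + du))), x ∈ Cplus → c • x ∈ Cplus)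
    (hdim : ∃ L : Submodule ℝ (EuclideanSpace ℝ (Fin (ds + du))),
      Module.finrank ℝ L = du ∧ (L : Set (EuclideanSpace ℝ (Fin (ds + du)))) ⊆ Cplus)
    (hdim' : ∀ L : Submodule ℝ (EuclideanSpace ℝ (Fin (ds + du))),
      (L : Set (EuclideanSpace ℝ (Fin (ds + du)))) ⊆ Cplus → Module.finrank ℝ L ≤ du)
    (hint : Cplus ∩ {x | ∀ j : Fin du, x (Fin.natAdd ds j) = 0} = {0})
    -- the coordinate projections
    (π : EuclideanSpace ℝ (Fin (ds + du)) → EuclideanSpace ℝ (Fin ds))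
    (hπ : ∀ x i, π x i = x (Fin.castAdd du i))
    (πp : EuclideanSpace ℝ (Fin (ds + du)) → EuclideanSpace ℝ (Fin du))
    (hπp : ∀ x j, πp x j = x (Fin.natAdd ds j))
    (Γ : Set (EuclideanSpace ℝ (Fin (ds + du))))
    -- Γ is a d_s-dimensional embedded C¹ submanifold
    (hΓmani : ∀ p ∈ Γ, ∃ (V : Set (EuclideanSpace ℝ (Fin (ds + du))))
      (W : Set (EuclideanSpace ℝ (Fin ds)))
      (f : EuclideanSpace ℝ (Fin ds) → EuclideanSpace ℝ (Fin (ds + du))),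
      IsOpen V ∧ p ∈ V ∧ IsOpen W ∧ ContDiffOn ℝ 1 f W ∧ Set.InjOn f W ∧
      f '' W = Γ ∩ V ∧ ∀ w ∈ W, Function.Injective (fderivWithin ℝ f W w))
    -- chord transversality: lines through two points of Γ are normal to a
    -- d_u-dimensional subspace contained in C₊
    (hchord : ∀ x ∈ Γ, ∀ y ∈ Γ, x ≠ y →
      ∃ L : Submodule ℝ (EuclideanSpace ℝ (Fin (ds + du))),
        Module.finrank ℝ L = du ∧
        (L : Set (EuclideanSpace ℝ (Fin (ds + du)))) ⊆ Cplus ∧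
        ∀ v ∈ L, ⟪x - y, v⟫ = 0) :
    Set.InjOn π Γ ∧ IsOpen (π '' Γ) ∧
    ∃ γ : EuclideanSpace ℝ (Fin ds) → EuclideanSpace ℝ (Fin du),
      ContDiffOn ℝ 1 γ (π '' Γ) ∧
      Γ = {x | π x ∈ π '' Γ ∧ πp x = γ (π x)} := by
  have hπL : π = ⇑(eP1 ds du) := funext fun x => PiLp.ext fun i => (hπ x i).trans rfl
  have hπpL : πp = ⇑(eP2 ds du) := funext fun x => PiLp.ext fun j => (hπp x j).trans rfl
  subst hπL hπpL
  -- `eP2` vanishes only at `0` on the cone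
  have hU0 : ∀ x ∈ Cplus, eP2 ds du x = 0 → x = 0 := by
    intro x hx h0
    have hmem : x ∈ Cplus ∩
        {x : EuclideanSpace ℝ (Fin (ds + du)) | ∀ j : Fin du, x (Fin.natAdd ds j) = 0} :=
      ⟨hx, fun j => by rw [← eP2_apply ds du x j, h0]; rfl⟩
    rw [hint] at hmem
    exact hmem
  -- uniform lower bound for `eP2` on the cone
  obtain ⟨δ, hδpos, hδ⟩ : ∃ δ > 0, ∀ x ∈ Cplus, δ * ‖x‖ ≤ ‖eP2 ds du x‖ := by
    by_cases hK : (Cplus ∩ Metric.sphere (0 : EuclideanSpace ℝ (Fin (ds + du))) 1).Nonempty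
    · obtain ⟨x₀, hx₀K, hmin⟩ := ((isCompact_sphere (0 : EuclideanSpace ℝ (Fin (ds + du))) 1).inter_left
        hclosed).exists_isMinOn hK ((eP2 ds du).continuous.norm.continuousOn)
      have hx₀n : ‖x₀‖ = 1 := by simpa using hx₀K.2
      have hx₀0 : x₀ ≠ 0 := by intro h; rw [h] at hx₀n; simp at hx₀n
      have hpos : 0 < ‖eP2 ds du x₀‖ := by
        rcases (norm_nonneg (eP2 ds du x₀)).lt_or_eq with h | h
        · exact h
        · exact absurd (hU0 x₀ hx₀K.1 (norm_eq_zero.mp h.symm)) hx₀0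
      refine ⟨‖eP2 ds du x₀‖, hpos, fun x hx => ?_⟩
      rcases eq_or_ne x 0 with rfl | hx0
      · simp
      · have hxn : 0 < ‖x‖ := norm_pos_iff.mpr hx0
        have h1 : (‖x‖⁻¹ • x) ∈ Cplus ∩ Metric.sphere (0 : EuclideanSpace ℝ (Fin (ds + du))) 1 := by
          refine ⟨hcone _ _ hx, ?_⟩
          simp [norm_smul, abs_of_pos (inv_pos.mpr hxn), inv_mul_cancel₀ hxn.ne']
        have h2 : ‖eP2 ds du x₀‖ ≤ ‖eP2 ds du (‖x‖⁻¹ • x)‖ := hmin h1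
        have h3 : ‖eP2 ds du (‖x‖⁻¹ • x)‖ = ‖x‖⁻¹ * ‖eP2 ds du x‖ := by
          rw [map_smul, norm_smul, Real.norm_eq_abs, abs_of_pos (inv_pos.mpr hxn)]
        rw [h3] at h2
        calc ‖eP2 ds du x₀‖ * ‖x‖ ≤ (‖x‖⁻¹ * ‖eP2 ds du x‖) * ‖x‖ :=
              mul_le_mul_of_nonneg_right h2 hxn.le
          _ = ‖eP2 ds du x‖ := by field_simp
    · refine ⟨1, one_pos, fun x hx => ?_⟩
      rcases eq_or_ne x 0 with rfl | hx0
      · simp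
      · exfalso
        have hxn : 0 < ‖x‖ := norm_pos_iff.mpr hx0
        exact hK ⟨‖x‖⁻¹ • x, hcone _ _ hx,
          by simp [norm_smul, abs_of_pos (inv_pos.mpr hxn), inv_mul_cancel₀ hxn.ne']⟩
  set C : ℝ := Real.sqrt (1 + δ⁻¹ ^ 2) with hCdef
  -- the chord estimate
  have hbiLip : ∀ x ∈ Γ, ∀ y ∈ Γ, ‖x - y‖ ≤ C * ‖eP1 ds du (x - y)‖ := by
    intro x hx y hy
    rcases eq_or_ne x y with rfl | hne
    · simp
    obtain ⟨L, hLrank, hLsub, hLperp⟩ := hchord x hx y hy hne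
    set c := x - y with hc
    set T : L →ₗ[ℝ] EuclideanSpace ℝ (Fin du) := (eP2 ds du).toLinearMap.comp L.subtype with hT
    have hTinj : Function.Injective T := by
      intro a b hab
      have h0 : ((a : EuclideanSpace ℝ (Fin (ds + du))) - b) = 0 := by
        apply hU0 _ (hLsub (L.sub_mem a.2 b.2))
        have : eP2 ds du (a : EuclideanSpace ℝ (Fin (ds + du)))
            = eP2 ds du (b : EuclideanSpace ℝ (Fin (ds + du))) := hab
        rw [map_sub, this, sub_self]
      exact Subtype.ext (sub_eq_zero.mp h0)
    have hTsurj : Function.Surjective T := by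
      have hfr : Module.finrank ℝ L = Module.finrank ℝ (EuclideanSpace ℝ (Fin du)) := by
        rw [hLrank, finrank_euclideanSpace_fin]
      exact (LinearMap.injective_iff_surjective_of_finrank_eq_finrank hfr).mp hTinj
    obtain ⟨z, hz⟩ := hTsurj (eP2 ds du c)
    have hz' : eP2 ds du (z : EuclideanSpace ℝ (Fin (ds + du))) = eP2 ds du c := hz
    have hz1 : δ * ‖(z : EuclideanSpace ℝ (Fin (ds + du)))‖ ≤ ‖eP2 ds du c‖ := by
      rw [← hz']; exact hδ _ (hLsub z.2)
    have hperp : ⟪c, (z : EuclideanSpace ℝ (Fin (ds + du)))⟫ = 0 := hLperp _ z.2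
    rw [inner_split, hz'] at hperp
    have h2 : ‖eP2 ds du c‖ ^ 2 = -⟪eP1 ds du c, eP1 ds du (z : EuclideanSpace ℝ (Fin (ds + du)))⟫ := by
      have := real_inner_self_eq_norm_sq (eP2 ds du c)
      linarith
    have h3 : ‖eP2 ds du c‖ ^ 2 ≤ ‖eP1 ds du c‖ * ‖(z : EuclideanSpace ℝ (Fin (ds + du)))‖ := by
      rw [h2]
      calc -⟪eP1 ds du c, eP1 ds du (z : EuclideanSpace ℝ (Fin (ds + du)))⟫
          ≤ ‖eP1 ds du c‖ * ‖eP1 ds du (z : EuclideanSpace ℝ (Fin (ds + du)))‖ := by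
            have := abs_real_inner_le_norm (eP1 ds du c)
              (eP1 ds du (z : EuclideanSpace ℝ (Fin (ds + du))))
            have h := neg_abs_le (⟪eP1 ds du c, eP1 ds du (z : EuclideanSpace ℝ (Fin (ds + du)))⟫)
            linarith
        _ ≤ ‖eP1 ds du c‖ * ‖(z : EuclideanSpace ℝ (Fin (ds + du)))‖ :=
            mul_le_mul_of_nonneg_left (eP1_norm_le ds du _) (norm_nonneg _)
    have h5 : δ * ‖eP2 ds du c‖ ≤ ‖eP1 ds du c‖ := by
      rcases (norm_nonneg (eP2 ds du c)).lt_or_eq with hpos | h0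
      · have h4 : δ * ‖eP2 ds du c‖ ^ 2 ≤ ‖eP1 ds du c‖ * ‖eP2 ds du c‖ := by
          calc δ * ‖eP2 ds du c‖ ^ 2
              ≤ δ * (‖eP1 ds du c‖ * ‖(z : EuclideanSpace ℝ (Fin (ds + du)))‖) :=
                mul_le_mul_of_nonneg_left h3 hδpos.le
            _ = ‖eP1 ds du c‖ * (δ * ‖(z : EuclideanSpace ℝ (Fin (ds + du)))‖) := by ring
            _ ≤ ‖eP1 ds du c‖ * ‖eP2 ds du c‖ := mul_le_mul_of_nonneg_left hz1 (norm_nonneg _)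
        nlinarith
      · rw [← h0, mul_zero]; exact norm_nonneg _
    have h6 : ‖c‖ ^ 2 ≤ (1 + δ⁻¹ ^ 2) * ‖eP1 ds du c‖ ^ 2 := by
      rw [norm_split]
      have : ‖eP2 ds du c‖ ≤ δ⁻¹ * ‖eP1 ds du c‖ := by
        rw [← mul_le_mul_iff_right₀ hδpos, ← mul_assoc, mul_inv_cancel₀ hδpos.ne', one_mul]
        exact h5
      nlinarith [norm_nonneg (eP2 ds du c), inv_pos.mpr hδpos]
    calc ‖c‖ = Real.sqrt (‖c‖ ^ 2) := (Real.sqrt_sq (norm_nonneg c)).symm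
      _ ≤ Real.sqrt ((1 + δ⁻¹ ^ 2) * ‖eP1 ds du c‖ ^ 2) := Real.sqrt_le_sqrt h6
      _ = C * ‖eP1 ds du c‖ := by
          rw [hCdef, Real.sqrt_mul (by positivity), Real.sqrt_sq (norm_nonneg _)]
  -- injectivity
  have hinjΓ : Set.InjOn (⇑(eP1 ds du)) Γ := by
    intro x hx y hy hxy
    have h := hbiLip x hx y hy
    rw [map_sub, hxy, sub_self, norm_zero, mul_zero] at h
    have h0 : ‖x - y‖ = 0 := le_antisymm h (norm_nonneg _)
    exact sub_eq_zero.mp (norm_eq_zero.mp h0)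
  -- the per-point local analysis
  have main : ∀ p ∈ Γ, (⇑(eP1 ds du) '' Γ ∈ nhds (eP1 ds du p)) ∧
      ContDiffAt ℝ 1 (fun s => eP2 ds du (Function.invFunOn (⇑(eP1 ds du)) Γ s)) (eP1 ds du p) := by
    intro p hp
    obtain ⟨V, W, f, hV, hpV, hW, hfC, hfinj, hfim, hfd⟩ := hΓmani p hp
    obtain ⟨w, hw, hfw⟩ : ∃ w ∈ W, f w = p := by
      have : p ∈ f '' W := by rw [hfim]; exact ⟨hp, hpV⟩
      obtain ⟨w, hw, hfw⟩ := this
      exact ⟨w, hw, hfw⟩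
    have hWsub : ∀ w' ∈ W, f w' ∈ Γ := by
      intro w' hw'
      have : f w' ∈ Γ ∩ V := by rw [← hfim]; exact mem_image_of_mem f hw'
      exact this.1
    have hcda : ContDiffAt ℝ 1 f w := hfC.contDiffAt (hW.mem_nhds hw)
    have hdiff : DifferentiableAt ℝ f w := hcda.differentiableAt one_ne_zero
    have hDfinj : Function.Injective (fderiv ℝ f w) := by
      rw [← fderivWithin_of_isOpen hW hw]; exact hfd w hw
    -- tangent bound
    have htan : ∀ v, ‖fderiv ℝ f w v‖ ≤ C * ‖eP1 ds du (fderiv ℝ f w v)‖ := by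
      intro v
      set u := fderiv ℝ f w v with hu
      have hφ : HasDerivAt (fun t : ℝ => f (w + t • v)) u 0 := by
        have h1 : HasDerivAt (fun t : ℝ => w + t • v) v 0 := by
          simpa using ((hasDerivAt_id (0 : ℝ)).smul_const v).const_add w
        have hfd0 : HasFDerivAt f (fderiv ℝ f w) (w + (0 : ℝ) • v) := by
          have hw0 : w + (0 : ℝ) • v = w := by simp
          rw [hw0]; exact hdiff.hasFDerivAt
        have h2 := hfd0.comp_hasDerivAt 0 h1
        exact h2
      have hslope := hasDerivAt_iff_tendsto_slope.mp hφ
      have hev : ∀ᶠ t in nhdsWithin (0 : ℝ) {(0 : ℝ)}ᶜ,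
          ‖slope (fun t : ℝ => f (w + t • v)) 0 t‖ ≤
            C * ‖eP1 ds du (slope (fun t : ℝ => f (w + t • v)) 0 t)‖ := by
        have hWmem : ∀ᶠ t in nhds (0 : ℝ), w + t • v ∈ W := by
          have hcont : ContinuousAt (fun t : ℝ => w + t • v) 0 :=
            (continuous_const.add (continuous_id.smul continuous_const)).continuousAt
          exact hcont.eventually_mem (by simpa using hW.mem_nhds hw)
        refine (hWmem.filter_mono nhdsWithin_le_nhds).mono ?_
        intro t ht
        have h1 : f (w + t • v) ∈ Γ := hWsub _ ht
        have h0 : f (w + (0 : ℝ) • v) ∈ Γ := by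
          have : w + (0 : ℝ) • v = w := by simp
          rw [this]; exact hWsub _ hw
        have hd := hbiLip _ h1 _ h0
        have hs : slope (fun t : ℝ => f (w + t • v)) 0 t
            = (t - 0)⁻¹ • (f (w + t • v) - f (w + (0 : ℝ) • v)) := by
          simp [slope_def_module]
        rw [hs, sub_zero, map_smul, norm_smul, norm_smul]
        rw [← mul_assoc, mul_comm C, mul_assoc]
        exact mul_le_mul_of_nonneg_left hd (norm_nonneg _)
      have hl1 : Filter.Tendsto (fun t => ‖slope (fun t : ℝ => f (w + t • v)) 0 t‖)
          (nhdsWithin (0 : ℝ) {(0 : ℝ)}ᶜ) (nhds ‖u‖) := hslope.norm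
      have hl2 : Filter.Tendsto (fun t => C * ‖eP1 ds du (slope (fun t : ℝ => f (w + t • v)) 0 t)‖)
          (nhdsWithin (0 : ℝ) {(0 : ℝ)}ᶜ) (nhds (C * ‖eP1 ds du u‖)) :=
        ((((eP1 ds du).continuous.tendsto u).comp hslope).norm).const_mul C
      exact le_of_tendsto_of_tendsto hl1 hl2 hev
    -- invertible derivative of g = eP1 ∘ f
    set T : EuclideanSpace ℝ (Fin ds) →L[ℝ] EuclideanSpace ℝ (Fin ds) :=
      (eP1 ds du).comp (fderiv ℝ f w) with hT
    have hT0 : ∀ v, T v = 0 → v = 0 := by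
      intro v hv
      have h1 := htan v
      have h2 : eP1 ds du (fderiv ℝ f w v) = 0 := hv
      rw [h2, norm_zero, mul_zero] at h1
      have h3 : fderiv ℝ f w v = 0 := norm_le_zero_iff.mp h1
      have h4 : fderiv ℝ f w v = fderiv ℝ f w 0 := by rw [h3, map_zero]
      exact hDfinj h4
    have hTinj : Function.Injective T := by
      intro a b hab
      have : T (a - b) = 0 := by rw [map_sub, hab, sub_self]
      exact sub_eq_zero.mp (hT0 _ this)
    have hbijT : Function.Bijective T :=
      ⟨hTinj, (LinearMap.injective_iff_surjective_of_finrank_eq_finrank rfl).mp hTinj⟩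
    set Teq : EuclideanSpace ℝ (Fin ds) ≃L[ℝ] EuclideanSpace ℝ (Fin ds) :=
      (LinearEquiv.ofBijective (T : EuclideanSpace ℝ (Fin ds) →ₗ[ℝ] EuclideanSpace ℝ (Fin ds))
        hbijT).toContinuousLinearEquiv with hTeq
    have hTeqcoe : (Teq : EuclideanSpace ℝ (Fin ds) →L[ℝ] EuclideanSpace ℝ (Fin ds)) = T := by
      ext v; rfl
    set g : EuclideanSpace ℝ (Fin ds) → EuclideanSpace ℝ (Fin ds) :=
      fun s => eP1 ds du (f s) with hgdef
    have hgC : ContDiffAt ℝ 1 g w := ((eP1 ds du).contDiff.contDiffAt).comp w hcda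
    have hg' : HasFDerivAt g (Teq : EuclideanSpace ℝ (Fin ds) →L[ℝ] EuclideanSpace ℝ (Fin ds)) w := by
      rw [hTeqcoe]
      exact ((eP1 ds du).hasFDerivAt).comp w hdiff.hasFDerivAt
    have hstrict : HasStrictFDerivAt g
        (Teq : EuclideanSpace ℝ (Fin ds) →L[ℝ] EuclideanSpace ℝ (Fin ds)) w :=
      hgC.hasStrictFDerivAt' hg' one_ne_zero
    have hgwp : eP1 ds du p = g w := by rw [← hfw]
    constructor
    · have hmap := hstrict.map_nhds_eq_of_equiv
      rw [hgwp, ← hmap]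
      exact Filter.mem_map.mpr (Filter.mem_of_superset (hW.mem_nhds hw)
        (fun w' hw' => ⟨f w', hWsub _ hw', rfl⟩))
    · set h : EuclideanSpace ℝ (Fin ds) → EuclideanSpace ℝ (Fin ds) :=
        hgC.localInverse hg' one_ne_zero with hhdef
      have hhC : ContDiffAt ℝ 1 h (g w) := hgC.to_localInverse hg' one_ne_zero
      have hhw : h (g w) = w := hgC.localInverse_apply_image hg' one_ne_zero
      have hcont : ContinuousAt h (g w) := hhC.continuousAt
      have hevW : ∀ᶠ s in nhds (g w), h s ∈ W :=
        hcont.eventually_mem (by rw [hhw]; exact hW.mem_nhds hw)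
      have hevr : ∀ᶠ s in nhds (g w), g (h s) = s := hstrict.eventually_right_inverse
      have heq : ∀ᶠ s in nhds (g w),
          eP2 ds du (Function.invFunOn (⇑(eP1 ds du)) Γ s) = eP2 ds du (f (h s)) := by
        filter_upwards [hevW, hevr] with s hsW hsr
        have h1 : f (h s) ∈ Γ := hWsub _ hsW
        have h2 : eP1 ds du (f (h s)) = s := hsr
        have h3 := hinjΓ.leftInvOn_invFunOn h1
        rw [h2] at h3
        rw [h3]
      have hC2 : ContDiffAt ℝ 1 (fun s => eP2 ds du (f (h s))) (g w) := by
        have hf2 : ContDiffAt ℝ 1 f (h (g w)) := by rw [hhw]; exact hcda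
        exact ((eP2 ds du).contDiff.contDiffAt).comp _ (hf2.comp _ hhC)
      rw [hgwp]
      exact hC2.congr_of_eventuallyEq heq
  -- assemble
  refine ⟨hinjΓ, ?_, ?_⟩
  · rw [isOpen_iff_mem_nhds]
    rintro s ⟨p, hp, rfl⟩
    exact (main p hp).1
  · refine ⟨fun s => eP2 ds du (Function.invFunOn (⇑(eP1 ds du)) Γ s), ?_, ?_⟩
    · rintro s ⟨p, hp, rfl⟩
      exact ((main p hp).2).contDiffWithinAt
    · ext x
      simp only [Set.mem_setOf_eq]
      constructor
      · intro hx
        refine ⟨Set.mem_image_of_mem _ hx, ?_⟩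
        rw [hinjΓ.leftInvOn_invFunOn hx]
      · rintro ⟨⟨q, hq, hqe⟩, hx2⟩
        have hyΓ : Function.invFunOn (⇑(eP1 ds du)) Γ (eP1 ds du x) ∈ Γ :=
          Function.invFunOn_mem ⟨q, hq, hqe⟩
        have hyπ : eP1 ds du (Function.invFunOn (⇑(eP1 ds du)) Γ (eP1 ds du x)) = eP1 ds du x :=
          Function.invFunOn_eq ⟨q, hq, hqe⟩
        have hxy : x = Function.invFunOn (⇑(eP1 ds du)) Γ (eP1 ds du x) :=
          eP_ext ds du _ _ hyπ.symm hx2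
        rw [hxy]
        exact hyΓ
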